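/- Let ℓ : ℝ^d → ℝ be convex and differentiable, and use the mean-field family, so T_λ(u) = (c_1 u_1 + m_1, …, c_d u_d + m_d) with c_i = ϕ(s_i) > 0. If the coordinates u_1,…,u_d of u are independent with E[u_i] = 0 and all expectations below exist, then E[(∂_i ℓ)(T_λ(u)) · u_i] ≥ 0 for every coordinate i = 1, …, d and every parameter λ. -/

import Mathlib

open MeasureTheory ProbabilityTheory

noncomputable section

abbrev Euc (d : ℕ) := EuclideanSpace ℝ (Fin d)

/-- The parameter space `λ = (m, s)` of the mean-field location-scale family. -/
abbrev MParam (d : ℕ) := EuclideanSpace ℝ ((Fin d) ⊕ (Fin d))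

def mOfM {d : ℕ} (lam : MParam d) (i : Fin d) : ℝ := lam (Sum.inl i)
def sOfM {d : ℕ} (lam : MParam d) (i : Fin d) : ℝ := lam (Sum.inr i)

/-- The mean-field reparameterization
`T_λ(u) = (ϕ(s₁) u₁ + m₁, …, ϕ(s_d) u_d + m_d)`. -/
def TmapM {d : ℕ} (ϕ : ℝ → ℝ) (lam : MParam d) (u : Fin d → ℝ) : Euc d :=
  WithLp.toLp 2 fun i => mOfM lam i + ϕ (sOfM lam i) * u i

open InnerProductSpace

lemma key_mono {d : ℕ} (ℓ : Euc d → ℝ) (hconv : ConvexOn ℝ Set.univ ℓ)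
    (hdiff : Differentiable ℝ ℓ) (i : Fin d) (c : ℝ) (hc : 0 < c) (y : Euc d) (t : ℝ) :
    0 ≤ (gradient ℓ (y + (c * t) • EuclideanSpace.single i (1:ℝ)) i - gradient ℓ y i) * t := by
  set e : Euc d := EuclideanSpace.single i (1:ℝ) with he
  set γ : ℝ → Euc d := fun s => y + s • (c • e) with hγdef
  have hγ : ∀ s, HasDerivAt γ (c • e) s := by
    intro s
    have := ((hasDerivAt_id s).smul_const (c • e)).const_add y
    rw [one_smul] at this
    exact this
  have hf : ∀ s : ℝ, HasDerivAt (fun s => ℓ (γ s)) (c * gradient ℓ (γ s) i) s := by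
    intro s
    have h1 : HasFDerivAt ℓ (toDual ℝ (Euc d) (gradient ℓ (γ s))) (γ s) :=
      (hdiff (γ s)).hasGradientAt.hasFDerivAt
    have h2 := h1.comp_hasDerivAt s (hγ s)
    convert h2 using 1
    · rfl
    · rfl
    · rfl
    rw [toDual_apply_apply, real_inner_smul_right, he, EuclideanSpace.inner_single_right]
    simp [mul_comm]
  have hconvf : ConvexOn ℝ Set.univ (fun s => ℓ (γ s)) := by
    have hA : ∀ s : ℝ, γ s = (LinearMap.toSpanSingleton ℝ (Euc d) (c • e)) (s - 0) +ᵥ γ 0 := by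
      intro s
      simp [hγdef, LinearMap.toSpanSingleton_apply, vadd_eq_add]
      module
    have := hconv.comp_affineMap (AffineMap.mk' γ (LinearMap.toSpanSingleton ℝ (Euc d) (c • e)) 0 hA)
    simp at this
    exact this
  have hmono : MonotoneOn (deriv fun s => ℓ (γ s)) Set.univ :=
    hconvf.monotoneOn_deriv (fun x _ => (hf x).differentiableAt)
  have hd : ∀ s : ℝ, deriv (fun s => ℓ (γ s)) s = c * gradient ℓ (γ s) i :=
    fun s => (hf s).deriv
  have hkey : 0 ≤ (c * gradient ℓ (γ t) i - c * gradient ℓ (γ 0) i) * t := by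
    rcases le_or_gt 0 t with h | h
    · have := hmono (Set.mem_univ 0) (Set.mem_univ t) h
      rw [hd, hd] at this
      nlinarith
    · have := hmono (Set.mem_univ t) (Set.mem_univ 0) h.le
      rw [hd, hd] at this
      nlinarith
  have h0 : γ 0 = y := by simp [hγdef]
  have ht : γ t = y + (c * t) • e := by
    rw [hγdef]; simp [smul_smul, mul_comm]
  rw [h0, ht] at hkey
  nlinarith

/-- For a convex differentiable `ℓ : ℝ^d → ℝ` and the mean-field
family with positive diagonal conditioner `ϕ`, if the coordinates of `u` are
independent with mean zero (and the relevant expectations exist), then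
`E[(∂ᵢℓ)(T_λ(u)) · uᵢ] ≥ 0` for every coordinate `i` and every parameter `λ`. -/
theorem meanfield_gradient_covariance_nonneg
    {d : ℕ} {Ω : Type*} [MeasurableSpace Ω] (μ : Measure Ω) [IsProbabilityMeasure μ]
    (u : Ω → Fin d → ℝ)
    (hmeas : ∀ i, Measurable fun ω => u ω i)
    (hindep : iIndepFun (fun i ω => u ω i) μ)
    (hmean : ∀ i, ∫ ω, u ω i ∂μ = 0)
    (hint1 : ∀ i, Integrable (fun ω => u ω i) μ)
    (ϕ : ℝ → ℝ) (hϕpos : ∀ x, 0 < ϕ x)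
    (ℓ : Euc d → ℝ) (hconv : ConvexOn ℝ Set.univ ℓ) (hdiff : Differentiable ℝ ℓ)
    (hint : ∀ (i : Fin d) (lam : MParam d),
      Integrable (fun ω => gradient ℓ (TmapM ϕ lam (u ω)) i * u ω i) μ)
    (hint' : ∀ (i : Fin d) (lam : MParam d),
      Integrable
        (fun ω => gradient ℓ (TmapM ϕ lam (Function.update (u ω) i 0)) i * u ω i) μ) :
    ∀ (i : Fin d) (lam : MParam d),
      0 ≤ ∫ ω, gradient ℓ (TmapM ϕ lam (u ω)) i * u ω i ∂μ := by
  intro i lam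
  set c : ℝ := ϕ (sOfM lam i) with hcdef
  have hc : 0 < c := hϕpos _
  -- decomposition T(u) = T(update u i 0) + (c * uᵢ) • eᵢ
  have hdecomp : ∀ ω, TmapM ϕ lam (u ω) =
      TmapM ϕ lam (Function.update (u ω) i 0) + (c * u ω i) • EuclideanSpace.single i (1:ℝ) := by
    intro ω
    ext j
    show TmapM ϕ lam (u ω) j = TmapM ϕ lam (Function.update (u ω) i 0) j
      + (c * u ω i) * (EuclideanSpace.single i (1:ℝ)) j
    by_cases hj : j = i
    · subst hj
      simp [TmapM, EuclideanSpace.single_apply, hcdef]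
    · simp [TmapM, Function.update_apply, hj, EuclideanSpace.single_apply, Ne.symm hj]
  -- pointwise nonnegativity of the difference
  have hpt : ∀ ω, 0 ≤ gradient ℓ (TmapM ϕ lam (u ω)) i * u ω i
      - gradient ℓ (TmapM ϕ lam (Function.update (u ω) i 0)) i * u ω i := by
    intro ω
    have := key_mono ℓ hconv hdiff i c hc
      (TmapM ϕ lam (Function.update (u ω) i 0)) (u ω i)
    rw [← hdecomp ω] at this
    nlinarith
  have hnn : 0 ≤ ∫ ω, (gradient ℓ (TmapM ϕ lam (u ω)) i * u ω i
      - gradient ℓ (TmapM ϕ lam (Function.update (u ω) i 0)) i * u ω i) ∂μ :=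
    integral_nonneg fun ω => hpt ω
  rw [integral_sub (hint i lam) (hint' i lam)] at hnn
  -- the second integral vanishes by independence
  -- measurability of x ↦ ∇ℓ(x) i
  have mg : Measurable fun x : Euc d => gradient ℓ x i := by
    have heq : (fun x : Euc d => gradient ℓ x i)
        = (fun L : Euc d →L[ℝ] ℝ => ((toDual ℝ (Euc d)).symm L) i) ∘ (fderiv ℝ ℓ) := rfl
    rw [heq]
    exact (((EuclideanSpace.proj i).continuous.comp
      (toDual ℝ (Euc d)).symm.continuous).measurable).comp (measurable_fderiv ℝ ℓ)
  -- the extension map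
  set F : ((({i}ᶜ : Finset (Fin d)) : Type) → ℝ) → (Fin d → ℝ) :=
    fun v j => if hj : j = i then 0 else v ⟨j, by simp [hj]⟩ with hF
  set G : ((({i}ᶜ : Finset (Fin d)) : Type) → ℝ) → ℝ :=
    fun v => gradient ℓ (TmapM ϕ lam (F v)) i with hG
  have hGmeas : Measurable G := by
    apply mg.comp
    have hcont : Continuous fun v => TmapM ϕ lam (F v) := by
      have heq : (fun v => TmapM ϕ lam (F v))
          = WithLp.toLp 2 ∘
            (fun v j => mOfM lam j + ϕ (sOfM lam j) * F v j) := rfl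
      rw [heq]
      refine (PiLp.continuous_toLp 2 fun _ : Fin d => ℝ).comp
        (continuous_pi fun j => ?_)
      by_cases hj : j = i
      · simp only [hF, dif_pos hj]
        continuity
      · simp only [hF, dif_neg hj]
        exact continuous_const.add (continuous_const.mul (continuous_apply _))
    exact hcont.measurable
  have hST : Disjoint ({i}ᶜ : Finset (Fin d)) ({i} : Finset (Fin d)) := by
    simp
  have hIF0 := hindep.indepFun_finset ({i}ᶜ) ({i}) hST hmeas
  have hIF := hIF0.comp hGmeas
    (measurable_pi_apply (⟨i, Finset.mem_singleton_self i⟩ : (({i} : Finset (Fin d)) : Type)))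
  have hIF2 : IndepFun
      (fun ω => gradient ℓ (TmapM ϕ lam (Function.update (u ω) i 0)) i)
      (fun ω => u ω i) μ := by
    have heq : (fun ω => gradient ℓ (TmapM ϕ lam (Function.update (u ω) i 0)) i)
        = G ∘ (fun a (j : (({i}ᶜ : Finset (Fin d)) : Type)) => u a j) := by
      funext ω
      show _ = gradient ℓ (TmapM ϕ lam (F fun j => u ω j)) i
      have : Function.update (u ω) i 0 = F (fun j => u ω j) := by
        funext j
        by_cases hj : j = i <;> simp [hF, hj, Function.update_apply]
      rw [this]
    rw [heq]
    exact hIF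
  have hhm : Measurable (fun ω => gradient ℓ (TmapM ϕ lam (Function.update (u ω) i 0)) i) := by
    have : Measurable fun ω (j : (({i}ᶜ : Finset (Fin d)) : Type)) => u ω j :=
      measurable_pi_lambda _ fun j => hmeas j
    have heq : (fun ω => gradient ℓ (TmapM ϕ lam (Function.update (u ω) i 0)) i)
        = G ∘ (fun a (j : (({i}ᶜ : Finset (Fin d)) : Type)) => u a j) := by
      funext ω
      show _ = gradient ℓ (TmapM ϕ lam (F fun j => u ω j)) i
      have : Function.update (u ω) i 0 = F (fun j => u ω j) := by
        funext j
        by_cases hj : j = i <;> simp [hF, hj, Function.update_apply]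
      rw [this]
    rw [heq]
    exact hGmeas.comp this
  have hzero : ∫ ω, gradient ℓ (TmapM ϕ lam (Function.update (u ω) i 0)) i * u ω i ∂μ = 0 := by
    rw [hIF2.integral_fun_mul_eq_mul_integral hhm.aestronglyMeasurable (hmeas i).aestronglyMeasurable,
      hmean i, mul_zero]
  rw [hzero] at hnn
  linarith

end
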